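/- Let f(z) = (α z² + β z + 1)/(z² + β z + α) with α, β real, and suppose the denominator is nonzero at e^{jω_p}. Then the phase change rate satisfies θ_f'(ω_p) = (2(α² - 1) + 2(α - 1)β cos ω_p) / |e^{j2ω_p} + β e^{jω_p} + α|². -/

import Mathlib

open Real Complex

/-- Phase change rate of the generic second-order all-pass
`f(z) = (αz² + βz + 1)/(z² + βz + α)`, where
`θ_f'(ω) = Im (j e^{jω} f'(e^{jω})/f(e^{jω}))` and
`f'(z) = ((2αz + β)(z² + βz + α) - (αz² + βz + 1)(2z + β))/(z² + βz + α)²`. -/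
theorem stmt_11 (α β : ℝ) (ωp : ℝ)
    (hden : Complex.exp (ωp * Complex.I) ^ 2 + β * Complex.exp (ωp * Complex.I) + α ≠ 0) :
    (let z : ℂ := Complex.exp (ωp * Complex.I)
     let num : ℂ := α * z ^ 2 + β * z + 1
     let den : ℂ := z ^ 2 + β * z + α
     let f' : ℂ := ((2 * α * z + β) * den - num * (2 * z + β)) / den ^ 2
     (Complex.I * z * f' / (num / den)).im) =
      (2 * (α ^ 2 - 1) + 2 * (α - 1) * β * Real.cos ωp) /
        (‖(Complex.exp (2 * ωp * Complex.I) + β * Complex.exp (ωp * Complex.I) + α)‖) ^ 2 := by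
  set z : ℂ := Complex.exp (ωp * Complex.I) with hzdef
  have hz0 : z ≠ 0 := Complex.exp_ne_zero _
  have hconj : (starRingEnd ℂ) z = z⁻¹ := by
    rw [hzdef, ← Complex.exp_conj, ← Complex.exp_neg]
    congr 1
    simp [Complex.conj_I]
  have hw : (starRingEnd ℂ) (z ^ 2 + (β : ℂ) * z + α) = z⁻¹ ^ 2 + β * z⁻¹ + α := by
    rw [map_add, map_add, map_mul, map_pow, hconj]
    simp [Complex.conj_ofReal]
  have hw0 : z⁻¹ ^ 2 + (β : ℂ) * z⁻¹ + α ≠ 0 := by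
    rw [← hw]; exact star_ne_zero.mpr hden
  have hnum : (α : ℂ) * z ^ 2 + β * z + 1 ≠ 0 := by
    have h : (α : ℂ) * z ^ 2 + β * z + 1 = z ^ 2 * (z⁻¹ ^ 2 + β * z⁻¹ + α) := by
      field_simp
      ring
    rw [h]
    exact mul_ne_zero (pow_ne_zero _ hz0) hw0
  have hcos : (Real.cos ωp : ℂ) = (z + z⁻¹) / 2 := by
    rw [← hconj, Complex.add_conj, hzdef]
    norm_num [Complex.exp_ofReal_mul_I_re]
  have hns : ((Complex.normSq (z ^ 2 + (β : ℂ) * z + α) : ℝ) : ℂ)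
      = (z ^ 2 + (β : ℂ) * z + α) * (z⁻¹ ^ 2 + β * z⁻¹ + α) := by
    rw [← hw, Complex.mul_conj]
  have hns0 : Complex.normSq (z ^ 2 + (β : ℂ) * z + α) ≠ 0 := by
    simpa using hden
  show (Complex.I * z * (((2 * α * z + β) * (z ^ 2 + β * z + α)
      - (α * z ^ 2 + β * z + 1) * (2 * z + β)) / (z ^ 2 + β * z + α) ^ 2)
      / ((α * z ^ 2 + β * z + 1) / (z ^ 2 + β * z + α))).im
    = (2 * (α ^ 2 - 1) + 2 * (α - 1) * β * Real.cos ωp) /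
        (‖(Complex.exp (2 * ωp * Complex.I) + β * Complex.exp (ωp * Complex.I) + α)‖) ^ 2
  have key : Complex.I * z * (((2 * α * z + β) * (z ^ 2 + β * z + α)
      - ((α : ℂ) * z ^ 2 + β * z + 1) * (2 * z + β)) / (z ^ 2 + β * z + α) ^ 2)
      / ((α * z ^ 2 + β * z + 1) / (z ^ 2 + β * z + α))
      = (((2 * (α ^ 2 - 1) + 2 * (α - 1) * β * Real.cos ωp : ℝ) : ℂ)
          / ((Complex.normSq (z ^ 2 + (β : ℂ) * z + α) : ℝ) : ℂ)) * Complex.I := by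
    have hrw : z⁻¹ ^ 2 + (β : ℂ) * z⁻¹ + α = ((α : ℂ) * z ^ 2 + β * z + 1) / z ^ 2 := by
      field_simp
      ring
    have hcos2 : (Real.cos ωp : ℂ) = (z ^ 2 + 1) / (2 * z) := by
      rw [hcos]
      field_simp
    rw [hns, hrw]
    push_cast [hcos2]
    field_simp [hz0, hden, hnum]
    ring
  rw [key]
  have habs : (‖(Complex.exp (2 * ωp * Complex.I) + β * Complex.exp (ωp * Complex.I) + α)‖) ^ 2
      = Complex.normSq (z ^ 2 + (β : ℂ) * z + α) := by
    rw [Complex.sq_norm]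
    congr 2
    rw [hzdef, ← Complex.exp_nat_mul]
    ring_nf
  rw [habs, ← Complex.ofReal_div]
  simp [Complex.cos_ofReal_re, ← Complex.ofReal_pow]
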